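/- Let Ω ⊂ ℝ^d be bounded with Poincaré constant C_p(Ω), i.e., ‖q̃‖_{L^2} ≤ C_p(Ω) |q̃|_{H^1} for all q̃ ∈ H^1(Ω) with zero mean. Then for any W > 0 and any q ∈ L^2(Ω) with zero mean, ‖q‖_{L^2} ≤ √2 · max{1, C_p(Ω)/W} · ‖q‖_{L^2+W H^1}, where ‖q‖_{L^2+W H^1} = inf_{q̃ ∈ H^1∩L^2_0} sqrt(‖q−q̃‖_{L^2}^2 + W^2 |q̃|_{H^1}^2). -/

import Mathlib

open MeasureTheory ENNReal

lemma sqrt_int_sq_eq {α : Type*} [MeasurableSpace α] {μ : Measure α} {f : α → ℝ}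
    (hf : MemLp f 2 μ) :
    Real.sqrt (∫ x, f x ^ 2 ∂μ) = (eLpNorm f 2 μ).toReal := by
  rw [hf.eLpNorm_eq_integral_rpow_norm two_ne_zero ENNReal.ofNat_ne_top]
  have h2 : (2 : ℝ≥0∞).toReal = (2 : ℝ) := by simp
  rw [ENNReal.toReal_ofReal (by positivity)]
  rw [h2]
  have : (∫ x, ‖f x‖ ^ (2:ℝ) ∂μ) = ∫ x, f x ^ 2 ∂μ := by
    congr 1; funext x
    rw [show ‖f x‖ ^ (2:ℝ) = ‖f x‖ ^ (2:ℕ) from Real.rpow_natCast _ 2]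
    simp [sq_abs]
  rw [this, Real.sqrt_eq_rpow]
  norm_num

lemma sqrt_triangle {α : Type*} [MeasurableSpace α] {μ : Measure α} {f g : α → ℝ}
    (hf : MemLp f 2 μ) (hg : MemLp g 2 μ) :
    Real.sqrt (∫ x, (f x + g x) ^ 2 ∂μ) ≤
      Real.sqrt (∫ x, f x ^ 2 ∂μ) + Real.sqrt (∫ x, g x ^ 2 ∂μ) := by
  have hfg : MemLp (f + g) 2 μ := hf.add hg
  have e1 : Real.sqrt (∫ x, (f x + g x) ^ 2 ∂μ) = (eLpNorm (f + g) 2 μ).toReal :=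
    sqrt_int_sq_eq hfg
  rw [e1, sqrt_int_sq_eq hf, sqrt_int_sq_eq hg]
  have h := eLpNorm_add_le hf.aestronglyMeasurable hg.aestronglyMeasurable
    (by norm_num : (1:ℝ≥0∞) ≤ 2)
  have := ENNReal.toReal_mono
    (ENNReal.add_ne_top.mpr ⟨hf.eLpNorm_ne_top, hg.eLpNorm_ne_top⟩) h
  rwa [ENNReal.toReal_add hf.eLpNorm_ne_top hg.eLpNorm_ne_top] at this

/-- Membership in `H¹(Ω)`. -/
def H1on (d : ℕ) (Ω : Set (EuclideanSpace ℝ (Fin d)))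
    (f : EuclideanSpace ℝ (Fin d) → ℝ) : Prop :=
  Differentiable ℝ f ∧ MemLp f 2 (volume.restrict Ω) ∧
    MemLp (fun x => ‖fderiv ℝ f x‖) 2 (volume.restrict Ω)

/-- The sum norm `‖q‖_{L² + W H¹}` with the infimum taken over `q̃ ∈ H¹(Ω) ∩ L²₀(Ω)`. -/
noncomputable def sumNorm0 (d : ℕ) (Ω : Set (EuclideanSpace ℝ (Fin d))) (W : ℝ)
    (q : EuclideanSpace ℝ (Fin d) → ℝ) : ℝ :=
  sInf { r : ℝ | ∃ f, H1on d Ω f ∧ (∫ x in Ω, f x) = 0 ∧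
    r = Real.sqrt ((∫ x in Ω, (q x - f x) ^ 2) + W ^ 2 * ∫ x in Ω, ‖fderiv ℝ f x‖ ^ 2) }

/-- If `Ω` has Poincaré constant `Cp` (for zero-mean `H¹` functions), then for any `W > 0`
and zero-mean `q ∈ L²(Ω)` we have
`‖q‖_{L²} ≤ √2 · max{1, Cp/W} · ‖q‖_{L²+W H¹}`. -/
theorem L2_le_sumNorm (d : ℕ) (Ω : Set (EuclideanSpace ℝ (Fin d)))
    (hΩ : Bornology.IsBounded Ω) (Cp : ℝ) (hCp : 0 < Cp)
    (hPoincare : ∀ f, H1on d Ω f → (∫ x in Ω, f x) = 0 →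
      Real.sqrt (∫ x in Ω, (f x) ^ 2) ≤ Cp * Real.sqrt (∫ x in Ω, ‖fderiv ℝ f x‖ ^ 2))
    (W : ℝ) (hW : 0 < W)
    (q : EuclideanSpace ℝ (Fin d) → ℝ)
    (hq : MemLp q 2 (volume.restrict Ω))
    (hmean : (∫ x in Ω, q x) = 0) :
    Real.sqrt (∫ x in Ω, (q x) ^ 2) ≤
      Real.sqrt 2 * max 1 (Cp / W) * sumNorm0 d Ω W q := by
  set C : ℝ := Real.sqrt 2 * max 1 (Cp / W) with hC
  have hC1 : (1:ℝ) ≤ max 1 (Cp / W) := le_max_left _ _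
  have hCpos : 0 < C := by
    have : (0:ℝ) < Real.sqrt 2 := Real.sqrt_pos.mpr (by norm_num)
    exact mul_pos this (lt_of_lt_of_le one_pos hC1)
  set S := { r : ℝ | ∃ f, H1on d Ω f ∧ (∫ x in Ω, f x) = 0 ∧
    r = Real.sqrt ((∫ x in Ω, (q x - f x) ^ 2) + W ^ 2 * ∫ x in Ω, ‖fderiv ℝ f x‖ ^ 2) } with hS
  haveI : IsFiniteMeasure (volume.restrict Ω) :=
    ⟨by simpa [Measure.restrict_apply_univ] using hΩ.measure_lt_top⟩
  have hne : S.Nonempty := by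
    refine ⟨_, (fun _ => (0:ℝ)), ⟨differentiable_const 0, ?_, ?_⟩, by simp, rfl⟩
    · exact memLp_const 0
    · have : (fun x : EuclideanSpace ℝ (Fin d) => ‖fderiv ℝ (fun _ => (0:ℝ)) x‖)
          = fun _ => (0:ℝ) := by
        funext x; simp [fderiv_const]
      rw [this]; exact memLp_const 0
  -- key: for every r ∈ S, sqrt(∫ q²) ≤ C * r
  have key : ∀ r ∈ S, Real.sqrt (∫ x in Ω, (q x) ^ 2) ≤ C * r := by
    rintro r ⟨f, hf, hfmean, rfl⟩
    set μ := volume.restrict Ω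
    set A := Real.sqrt (∫ x in Ω, (q x - f x) ^ 2) with hA
    set B := Real.sqrt (∫ x in Ω, ‖fderiv ℝ f x‖ ^ 2) with hB
    have hAnn : 0 ≤ A := Real.sqrt_nonneg _
    have hBnn : 0 ≤ B := Real.sqrt_nonneg _
    have hIA : (0:ℝ) ≤ ∫ x in Ω, (q x - f x) ^ 2 :=
      integral_nonneg fun x => sq_nonneg _
    have hIB : (0:ℝ) ≤ ∫ x in Ω, ‖fderiv ℝ f x‖ ^ 2 :=
      integral_nonneg fun x => sq_nonneg _
    -- triangle
    have hsub : MemLp (fun x => q x - f x) 2 μ := hq.sub hf.2.1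
    have htri : Real.sqrt (∫ x in Ω, (q x) ^ 2) ≤ A + Real.sqrt (∫ x in Ω, (f x) ^ 2) := by
      have := sqrt_triangle (μ := μ) hsub hf.2.1
      simpa using this
    have hpoin := hPoincare f hf hfmean
    have step1 : Real.sqrt (∫ x in Ω, (q x) ^ 2) ≤ A + Cp * B :=
      htri.trans (by linarith)
    have step2 : A + Cp * B ≤ max 1 (Cp / W) * (A + W * B) := by
      have h1 : A ≤ max 1 (Cp / W) * A := le_mul_of_one_le_left hAnn hC1
      have h2 : Cp * B ≤ max 1 (Cp / W) * (W * B) := by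
        have : Cp / W ≤ max 1 (Cp / W) := le_max_right _ _
        have hWB : 0 ≤ W * B := mul_nonneg hW.le hBnn
        calc Cp * B = (Cp / W) * (W * B) := by field_simp
          _ ≤ max 1 (Cp / W) * (W * B) := mul_le_mul_of_nonneg_right this hWB
      linarith [mul_add (max 1 (Cp / W)) A (W * B)]
    have step3 : A + W * B ≤ Real.sqrt 2 *
        Real.sqrt ((∫ x in Ω, (q x - f x) ^ 2) + W ^ 2 * ∫ x in Ω, ‖fderiv ℝ f x‖ ^ 2) := by
      have hAB : (∫ x in Ω, (q x - f x) ^ 2) + W ^ 2 * ∫ x in Ω, ‖fderiv ℝ f x‖ ^ 2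
          = A ^ 2 + (W * B) ^ 2 := by
        rw [hA, hB, Real.sq_sqrt hIA, mul_pow, Real.sq_sqrt hIB]
      rw [hAB, ← Real.sqrt_mul (by norm_num)]
      have hsq : (A + W * B) ^ 2 ≤ 2 * (A ^ 2 + (W * B) ^ 2) := by
        nlinarith [sq_nonneg (A - W * B)]
      calc A + W * B = Real.sqrt ((A + W * B) ^ 2) :=
            (Real.sqrt_sq (by positivity)).symm
        _ ≤ Real.sqrt (2 * (A ^ 2 + (W * B) ^ 2)) := Real.sqrt_le_sqrt hsq
    calc Real.sqrt (∫ x in Ω, (q x) ^ 2) ≤ A + Cp * B := step1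
      _ ≤ max 1 (Cp / W) * (A + W * B) := step2
      _ ≤ max 1 (Cp / W) * (Real.sqrt 2 *
          Real.sqrt ((∫ x in Ω, (q x - f x) ^ 2) + W ^ 2 * ∫ x in Ω, ‖fderiv ℝ f x‖ ^ 2)) :=
          mul_le_mul_of_nonneg_left step3 (le_trans zero_le_one hC1)
      _ = C * _ := by ring
  have hdiv : Real.sqrt (∫ x in Ω, (q x) ^ 2) / C ≤ sInf S := by
    apply le_csInf hne
    intro r hr
    rw [div_le_iff₀ hCpos, mul_comm]
    exact key r hr
  have : Real.sqrt (∫ x in Ω, (q x) ^ 2) ≤ C * sInf S := by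
    rw [div_le_iff₀ hCpos] at hdiv
    linarith
  simpa [sumNorm0, hS] using this
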